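/- arXiv:cs/0511097 — 2 statements merged into one kernel-verified Lean document; each statement's English description precedes it below -/
import Mathlib

section
/- Let K be a Kleene algebra and x ∈ K. The set {y ∈ K : y ≤ x} is closed under 0, 1, +, ·, and * (i.e., forms a subalgebra of K) if and only if x = x*. -/
open Computability

theorem downset_subalgebra_iff_kstar_fixed {K : Type*} [KleeneAlgebra K] (x : K) :
    ((0 : K) ≤ x ∧ (1 : K) ≤ x ∧
      (∀ y z : K, y ≤ x → z ≤ x → y + z ≤ x) ∧
      (∀ y z : K, y ≤ x → z ≤ x → y * z ≤ x) ∧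
      (∀ y : K, y ≤ x → y∗ ≤ x)) ↔ x = x∗ := by
  constructor
  · rintro ⟨-, -, -, -, hstar⟩
    exact le_antisymm le_kstar (hstar x le_rfl)
  · intro h
    refine ⟨zero_le, ?_, fun y z hy hz => add_le hy hz, ?_, ?_⟩
    · rw [h]; exact one_le_kstar
    · intro y z hy hz
      rw [h] at hy hz ⊢
      calc y * z ≤ x∗ * x∗ := mul_le_mul' hy hz
        _ = x∗ := kstar_mul_kstar x
    · intro y hy
      rw [h] at hy ⊢
      calc y∗ ≤ (x∗)∗ := kstar_mono hy
        _ = x∗ := kstar_idem x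
end

section
/- (Elimination of r = 0 in Kleene algebra with hypotheses.) Let E be a finite set of equations of Kleene algebra terms over atomic symbols p₁,…,pₙ, u = (p₁+⋯+pₙ)*, and r, s, t terms. Then all Kleene algebras satisfy (E ∧ r = 0) → s = t if and only if all Kleene algebras satisfy E → s + u·r·u = t + u·r·u. -/
open Computability

/-- Regular expressions (Kleene algebra terms) over `n` atomic symbols. -/
inductive KTerm (n : ℕ) : Type
  | var : Fin n → KTerm n
  | zero : KTerm n
  | one : KTerm n
  | add : KTerm n → KTerm n → KTerm n
  | mul : KTerm n → KTerm n → KTerm n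
  | star : KTerm n → KTerm n

/-- Evaluation of a term under an interpretation of the atomic symbols. -/
def KTerm.eval {n : ℕ} {K : Type*} [KleeneAlgebra K] (I : Fin n → K) : KTerm n → K
  | .var i => I i
  | .zero => 0
  | .one => 1
  | .add s t => s.eval I + t.eval I
  | .mul s t => s.eval I * t.eval I
  | .star s => (s.eval I)∗

/-- The universal regular expression `u = (p₁ + ⋯ + pₙ)*`. -/
def univExp (n : ℕ) : KTerm n :=
  .star ((List.ofFn (KTerm.var : Fin n → KTerm n)).foldr KTerm.add KTerm.zero)

universe u

namespace ZeroElim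

variable {K : Type u} [KleeneAlgebra K]

/-- The carrier of the quotient-like Kleene algebra `L = {x + ⊥ : x ≤ U}`. -/
def Carrier (U c : K) : Type u := {x : K // c ≤ x ∧ x ≤ U}

section

variable {U c : K}

theorem xc_le {x : K} (hUc : U * c ≤ c) (hx : x ≤ U) : x * c ≤ c :=
  (mul_le_mul_left hx c).trans hUc

theorem cx_le {x : K} (hcUr : c * U ≤ c) (hx : x ≤ U) : c * x ≤ c :=
  (mul_le_mul_right hx c).trans hcUr

theorem cc_le (hcU : c ≤ U) (hcUr : c * U ≤ c) : c * c ≤ c :=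
  (mul_le_mul_right hcU c).trans hcUr

variable (h1U : (1 : K) ≤ U) (hUU : U * U ≤ U) (hUs : U∗ ≤ U)
  (hcU : c ≤ U) (hUc : U * c ≤ c) (hcUr : c * U ≤ c)

/-- Addition on the carrier. -/
def cadd (a b : Carrier U c) : Carrier U c :=
  ⟨a.1 + b.1, le_trans a.2.1 le_self_add, add_le a.2.2 b.2.2⟩

/-- Zero of the carrier. -/
def czero (hcU : c ≤ U) : Carrier U c := ⟨c, le_rfl, hcU⟩

/-- One of the carrier. -/
def cone (h1U : (1 : K) ≤ U) (hcU : c ≤ U) : Carrier U c :=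
  ⟨1 + c, le_add_self, add_le h1U hcU⟩

/-- Multiplication on the carrier. -/
def cmul (hUU : U * U ≤ U) (hcU : c ≤ U) (a b : Carrier U c) : Carrier U c :=
  ⟨a.1 * b.1 + c, le_add_self,
    add_le ((mul_le_mul' a.2.2 b.2.2).trans hUU) hcU⟩

/-- Auxiliary scalar multiplication. -/
def nsmulAux (hcU : c ≤ U) : ℕ → Carrier U c → Carrier U c
  | 0, _ => czero hcU
  | k + 1, a => cadd (nsmulAux hcU k a) a

/-- Auxiliary power. -/
def npowAux (h1U : (1 : K) ≤ U) (hUU : U * U ≤ U) (hcU : c ≤ U) :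
    ℕ → Carrier U c → Carrier U c
  | 0, _ => cone h1U hcU
  | k + 1, a => cmul hUU hcU (npowAux h1U hUU hcU k a) a

/-- The Kleene algebra structure on `Carrier U c` with `0 = ⊥ = c`,
`1 = 1 + c`, `x * y = x·y + c` and everything else inherited. -/
def mkKA : KleeneAlgebra (Carrier U c) where
  nsmul := nsmulAux hcU
  nsmul_zero _ := rfl
  nsmul_succ _ _ := rfl
  npow := npowAux h1U hUU hcU
  npow_zero _ := rfl
  npow_succ _ _ := rfl
  add := cadd
  add_assoc a b c := Subtype.ext (add_assoc _ _ _)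
  zero := czero hcU
  zero_add a := Subtype.ext (a.2.1.add_eq_right)
  add_zero a := Subtype.ext (a.2.1.add_eq_left)
  add_comm a b := Subtype.ext (add_comm _ _)
  mul := cmul hUU hcU
  left_distrib a b d := Subtype.ext <| by
    show a.1 * (b.1 + d.1) + c = (a.1 * b.1 + c) + (a.1 * d.1 + c)
    rw [mul_add, add_add_add_comm, add_idem]
  right_distrib a b d := Subtype.ext <| by
    show (a.1 + b.1) * d.1 + c = (a.1 * d.1 + c) + (b.1 * d.1 + c)
    rw [add_mul, add_add_add_comm, add_idem]
  zero_mul a := Subtype.ext <| by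
    show c * a.1 + c = c
    exact (cx_le hcUr a.2.2).add_eq_right
  mul_zero a := Subtype.ext <| by
    show a.1 * c + c = c
    exact (xc_le hUc a.2.2).add_eq_right
  mul_assoc a b d := Subtype.ext <| by
    show (a.1 * b.1 + c) * d.1 + c = a.1 * (b.1 * d.1 + c) + c
    rw [add_mul, mul_add, mul_assoc, add_assoc, add_assoc,
      (cx_le hcUr d.2.2).add_eq_right, (xc_le hUc a.2.2).add_eq_right]
  one := cone h1U hcU
  one_mul a := Subtype.ext <| by
    show (1 + c) * a.1 + c = a.1
    rw [add_mul, one_mul, add_assoc, (cx_le hcUr a.2.2).add_eq_right,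
      a.2.1.add_eq_left]
  mul_one a := Subtype.ext <| by
    show a.1 * (1 + c) + c = a.1
    rw [mul_add, mul_one, add_assoc, (xc_le hUc a.2.2).add_eq_right,
      a.2.1.add_eq_left]
  le a b := a.1 ≤ b.1
  le_refl a := le_rfl
  le_trans a b d hab hbd := le_trans hab hbd
  le_antisymm a b hab hba := Subtype.ext (le_antisymm hab hba)
  sup := cadd
  le_sup_left a b := (le_self_add : a.1 ≤ a.1 + b.1)
  le_sup_right a b := (le_add_self : b.1 ≤ a.1 + b.1)
  sup_le a b d had hbd := (add_le had hbd : a.1 + b.1 ≤ d.1)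
  add_eq_sup a b := rfl
  bot := czero hcU
  bot_le a := a.2.1
  kstar a := ⟨a.1∗, a.2.1.trans le_kstar, (kstar_mono a.2.2).trans hUs⟩
  one_le_kstar a := (add_le one_le_kstar (a.2.1.trans le_kstar) : (1 : K) + c ≤ a.1∗)
  mul_kstar_le_kstar a :=
    (add_le mul_kstar_le_kstar (a.2.1.trans le_kstar) : a.1 * a.1∗ + c ≤ a.1∗)
  kstar_mul_le_kstar a :=
    (add_le kstar_mul_le_kstar (a.2.1.trans le_kstar) : a.1∗ * a.1 + c ≤ a.1∗)
  mul_kstar_le_self a b h := by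
    have h' : b.1 * a.1 ≤ b.1 := le_trans le_self_add h
    exact (add_le (mul_kstar_le_self h') b.2.1 : b.1 * a.1∗ + c ≤ b.1)
  kstar_mul_le_self a b h := by
    have h' : a.1 * b.1 ≤ b.1 := le_trans le_self_add h
    exact (add_le (kstar_mul_le_self h') b.2.1 : a.1∗ * b.1 + c ≤ b.1)

end

end ZeroElim

section EvalLemmas

open ZeroElim

variable {n : ℕ} {K : Type u} [KleeneAlgebra K] (I : Fin n → K)

theorem mem_foldr_le {l : List (KTerm n)} {w : KTerm n} (hw : w ∈ l) :
    w.eval I ≤ (l.foldr KTerm.add KTerm.zero).eval I := by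
  induction l with
  | nil => simp at hw
  | cons a l ih =>
    rcases List.mem_cons.1 hw with h | h
    · subst h; exact le_self_add
    · exact (ih h).trans le_add_self

/-- Every term evaluates below the universal expression. -/
theorem eval_le_univ (w : KTerm n) : w.eval I ≤ (univExp n).eval I := by
  have hU : (univExp n).eval I
      = (((List.ofFn (KTerm.var : Fin n → KTerm n)).foldr KTerm.add KTerm.zero).eval I)∗ := rfl
  induction w with
  | var i =>
    rw [hU]
    exact (mem_foldr_le I (by simp [List.mem_ofFn])).trans le_kstar
  | zero =>
    show (0 : K) ≤ _
    exact zero_le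
  | one =>
    rw [hU]
    exact one_le_kstar
  | add a b iha ihb => exact add_le iha ihb
  | mul a b iha ihb =>
    rw [hU] at iha ihb ⊢
    exact (mul_le_mul' iha ihb).trans_eq (kstar_mul_kstar _)
  | star a iha =>
    rw [hU] at iha ⊢
    exact (kstar_mono iha).trans_eq (kstar_idem _)

end EvalLemmas

theorem zero_hyp_elimination {n : ℕ}
    (E : Set (KTerm n × KTerm n)) (r s t : KTerm n) :
    (∀ (K : Type u) [KleeneAlgebra K], ∀ I : Fin n → K,
      (∀ e ∈ E, (e.1).eval I = (e.2).eval I) → r.eval I = 0 → s.eval I = t.eval I) ↔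
    (∀ (K : Type u) [KleeneAlgebra K], ∀ I : Fin n → K,
      (∀ e ∈ E, (e.1).eval I = (e.2).eval I) →
      (s.add ((univExp n).mul (r.mul (univExp n)))).eval I
        = (t.add ((univExp n).mul (r.mul (univExp n)))).eval I) := by
  constructor
  · intro h K _ I hE
    -- the hard direction: build the quotient-like Kleene algebra
    set U : K := (univExp n).eval I with hU
    set c : K := U * (r.eval I * U) with hc
    have h1U : (1 : K) ≤ U := one_le_kstar
    have hUU : U * U ≤ U := (kstar_mul_kstar _).le
    have hUs : U∗ ≤ U := (kstar_idem _).le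
    have hrU : r.eval I ≤ U := eval_le_univ I r
    have hcU : c ≤ U := by
      calc U * (r.eval I * U) ≤ U * (U * U) := mul_le_mul' le_rfl (mul_le_mul' hrU le_rfl)
        _ ≤ U * U := mul_le_mul' le_rfl hUU
        _ ≤ U := hUU
    have hUc : U * c ≤ c := by
      rw [hc, ← mul_assoc]
      exact mul_le_mul_left hUU _
    have hcUr : c * U ≤ c := by
      rw [hc]
      calc U * (r.eval I * U) * U = U * (r.eval I * (U * U)) := by
            rw [mul_assoc, mul_assoc]
        _ ≤ U * (r.eval I * U) := mul_le_mul_right (mul_le_mul_right hUU _) _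
    letI : KleeneAlgebra (ZeroElim.Carrier U c) := ZeroElim.mkKA h1U hUU hUs hcU hUc hcUr
    -- the interpretation in L
    set J : Fin n → ZeroElim.Carrier U c := fun i =>
      ⟨I i + c, le_add_self, add_le (eval_le_univ I (.var i)) hcU⟩ with hJ
    -- eval in L is eval in K plus c
    have keyval : ∀ w : KTerm n, (w.eval J).1 = w.eval I + c := by
      intro w
      induction w with
      | var i => rfl
      | zero => show c = 0 + c; rw [zero_add]
      | one => rfl
      | add a b iha ihb =>
        show (a.eval J).1 + (b.eval J).1 = _
        rw [iha, ihb, KTerm.eval, add_add_add_comm, add_idem]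
      | mul a b iha ihb =>
        show (a.eval J).1 * (b.eval J).1 + c = _
        rw [iha, ihb, KTerm.eval]
        have h1 : a.eval I * c ≤ c := ZeroElim.xc_le hUc (eval_le_univ I a)
        have h2 : c * b.eval I ≤ c := ZeroElim.cx_le hcUr (eval_le_univ I b)
        have h3 : c * c ≤ c := ZeroElim.cc_le hcU hcUr
        refine le_antisymm ?_ ?_
        · rw [add_mul, mul_add, mul_add]
          refine add_le (add_le (add_le le_self_add (h1.trans le_add_self))
            (add_le (h2.trans le_add_self) (h3.trans le_add_self))) le_add_self
        · exact add_le ((mul_le_mul' le_self_add le_self_add).trans le_self_add)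
            le_add_self
      | star a iha =>
        show ((a.eval J).1)∗ = _
        rw [iha, KTerm.eval]
        have haU : a.eval I ≤ U := eval_le_univ I a
        have hasU : (a.eval I)∗ ≤ U := (kstar_mono haU).trans hUs
        refine le_antisymm ?_ (add_le (kstar_mono le_self_add) (le_add_self.trans le_kstar))
        have hmul : (a.eval I + c) * ((a.eval I)∗ + c) ≤ (a.eval I)∗ + c := by
          rw [add_mul, mul_add, mul_add]
          refine add_le (add_le ?_ ?_) (add_le ?_ ?_)
          · exact le_trans mul_kstar_le_kstar le_self_add
          · exact le_trans (ZeroElim.xc_le hUc haU) le_add_self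
          · exact le_trans (ZeroElim.cx_le hcUr hasU) le_add_self
          · exact le_trans (ZeroElim.cc_le hcU hcUr) le_add_self
        have := kstar_mul_le_self hmul
        calc (a.eval I + c)∗ ≤ (a.eval I + c)∗ * ((a.eval I)∗ + c) :=
              le_mul_of_one_le_right' (le_trans one_le_kstar le_self_add)
          _ ≤ (a.eval I)∗ + c := this
    -- the equations hold in L
    have hEJ : ∀ e ∈ E, (e.1).eval J = (e.2).eval J := by
      intro e he
      apply Subtype.ext
      rw [keyval, keyval, hE e he]
    -- r evaluates to 0 in L
    have hrJ : r.eval J = 0 := by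
      apply Subtype.ext
      rw [keyval]
      show r.eval I + c = c
      refine LE.le.add_eq_right ?_
      calc r.eval I = 1 * r.eval I * 1 := by rw [one_mul, mul_one]
        _ ≤ U * r.eval I * U := mul_le_mul' (mul_le_mul' h1U le_rfl) h1U
        _ = c := by rw [hc, mul_assoc]
    have hst := h (ZeroElim.Carrier U c) J hEJ hrJ
    have hst' : s.eval I + c = t.eval I + c := by
      have := congrArg Subtype.val hst
      rwa [keyval, keyval] at this
    show s.eval I + U * (r.eval I * U) = t.eval I + U * (r.eval I * U)
    exact hst'
  · intro h K _ I hE hr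
    have key : ((univExp n).mul (r.mul (univExp n))).eval I = 0 := by
      show (univExp n).eval I * (r.eval I * (univExp n).eval I) = 0
      rw [hr, zero_mul, mul_zero]
    have h2 : s.eval I + ((univExp n).mul (r.mul (univExp n))).eval I
        = t.eval I + ((univExp n).mul (r.mul (univExp n))).eval I := h K I hE
    rwa [key, add_zero, add_zero] at h2
end
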